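/- Let G be a unified chain graph (UCG) over a finite vertex set V and let p = N(0, Σ) be a Gaussian distribution on ℝ^V with Σ positive definite. Then p satisfies the local Markov property with respect to G if and only if it satisfies the pairwise Markov property with respect to G. -/

import Mathlib

open Matrix MeasureTheory ProbabilityTheory

attribute [local instance] Classical.propDecidable

noncomputable section

variable {V : Type*}

/-- The submatrix of `S` with rows indexed by `X` and columns indexed by `Y`. -/
def msub (S : Matrix V V ℝ) (X Y : Finset V) : Matrix X Y ℝ :=
  Matrix.of fun i j => S i.1 j.1

/-- Conditional independence `X ⊥ Y | Z` for a centered Gaussian distribution with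
positive definite covariance matrix `S`:  `Σ_{X,Y} − Σ_{X,Z} (Σ_{Z,Z})⁻¹ Σ_{Z,Y} = 0`. -/
def gaussCI [Fintype V] [DecidableEq V] (S : Matrix V V ℝ) (X Y Z : Finset V) : Prop :=
  msub S X Y - msub S X Z * (msub S Z Z)⁻¹ * msub S Z Y = 0

/-- Pairwise disjointness of three sets. -/
def PDisj (X Y Z : Finset V) : Prop :=
  Disjoint X Y ∧ Disjoint X Z ∧ Disjoint Y Z

/-- Pairwise disjointness of four sets. -/
def PDisj4 (X Y W Z : Finset V) : Prop :=
  Disjoint X Y ∧ Disjoint X W ∧ Disjoint X Z ∧ Disjoint Y W ∧ Disjoint Y Z ∧ Disjoint W Z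

/-- A graph with three kinds of edges: undirected (`undir`), solid directed (`solid`,
written `A → B`) and dashed directed (`dashed`, written `A ⇢ B`).  No axioms are imposed. -/
structure PreGraph (V : Type*) where
  undir : V → V → Prop
  solid : V → V → Prop
  dashed : V → V → Prop

namespace PreGraph

variable (G : PreGraph V)

/-- There is an undirected edge between `a` and `b`. -/
def und (a b : V) : Prop := G.undir a b ∨ G.undir b a

/-- `a` and `b` are adjacent. -/
def adj (a b : V) : Prop :=
  G.und a b ∨ G.solid a b ∨ G.solid b a ∨ G.dashed a b ∨ G.dashed b a

/-- The edge between `a` and `b` is undirected or directed (solid or dashed) from `a` to `b`. -/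
def fwd (a b : V) : Prop := G.und a b ∨ G.solid a b ∨ G.dashed a b

/-- A route in `G`: a sequence of nodes `nodes 0, nodes 1, …, nodes len` such that
consecutive nodes are adjacent. -/
structure Route (G : PreGraph V) where
  len : ℕ
  nodes : ℕ → V
  adj_step : ∀ i < len, G.adj (nodes i) (nodes (i + 1))

/-- `c` is a collider node between `a` and `b`:  `a ⇢ c ⇠ b`, `a ⇢ c − b` (in either of the
two traversal directions) or `a ⇢ c ← b` (in either of the two traversal directions). -/
def colliderTriple (a c b : V) : Prop :=
  (G.dashed a c ∧ G.dashed b c) ∨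
  (G.dashed a c ∧ G.und c b) ∨ (G.und a c ∧ G.dashed b c) ∨
  (G.dashed a c ∧ G.solid b c) ∨ (G.solid a c ∧ G.dashed b c)

variable {G} in
/-- The node at position `k` of the route `ρ` is a collider node of `ρ`. -/
def Route.colliderNodeAt (ρ : G.Route) (k : ℕ) : Prop :=
  1 ≤ k ∧ k < ρ.len ∧ G.colliderTriple (ρ.nodes (k - 1)) (ρ.nodes k) (ρ.nodes (k + 1))

variable {G} in
/-- The positions `p, …, q` of `ρ` form a collider section of `ρ`, i.e. a maximal undirected
subroute `C1 − ⋯ − Cn` of `ρ` such that `A → C1 − ⋯ − Cn ← B` is a subroute of `ρ`. -/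
def Route.colliderSectionOcc (ρ : G.Route) (p q : ℕ) : Prop :=
  1 ≤ p ∧ p ≤ q ∧ q + 1 ≤ ρ.len ∧
  (∀ m, p ≤ m → m < q → G.und (ρ.nodes m) (ρ.nodes (m + 1))) ∧
  G.solid (ρ.nodes (p - 1)) (ρ.nodes p) ∧ G.solid (ρ.nodes (q + 1)) (ρ.nodes q)

variable {G} in
/-- The node at position `k` of `ρ` lies in a collider section of `ρ`. -/
def Route.inColliderSectionAt (ρ : G.Route) (k : ℕ) : Prop :=
  ∃ p q, ρ.colliderSectionOcc p q ∧ p ≤ k ∧ k ≤ q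

variable {G} in
/-- The route `ρ` is `Z`-open: (i) all collider nodes are in `Z`, (ii) every collider
section contains some node of `Z`, and (iii) every node which is neither a collider node
nor inside a collider section is outside `Z`. -/
def Route.IsZOpen (ρ : G.Route) (Z : Finset V) : Prop :=
  (∀ k, ρ.colliderNodeAt k → ρ.nodes k ∈ Z) ∧
  (∀ p q, ρ.colliderSectionOcc p q → ∃ m, p ≤ m ∧ m ≤ q ∧ ρ.nodes m ∈ Z) ∧
  (∀ k ≤ ρ.len, ¬ ρ.colliderNodeAt k → ¬ ρ.inColliderSectionAt k → ρ.nodes k ∉ Z)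

variable {G} in
/-- A pure collider route (with at least one edge): every intermediate node is a collider
node or lies in a collider section of the route. -/
def Route.IsPureCollider (ρ : G.Route) : Prop :=
  1 ≤ ρ.len ∧ ∀ k, 0 < k → k < ρ.len → ρ.colliderNodeAt k ∨ ρ.inColliderSectionAt k

/-- Separation `X ⊥_G Y | Z`: there is no `Z`-open route in `G` between a node of `X` and a
node of `Y`. -/
def Sep (X Y Z : Finset V) : Prop :=
  ¬ ∃ ρ : G.Route,
      ((ρ.nodes 0 ∈ X ∧ ρ.nodes ρ.len ∈ Y) ∨ (ρ.nodes 0 ∈ Y ∧ ρ.nodes ρ.len ∈ X)) ∧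
      ρ.IsZOpen Z

section Finite

variable [Fintype V] [DecidableEq V]

/-- The fathers of `X`: nodes `b` with `b → a` in `G` for some `a ∈ X`. -/
def fa (X : Finset V) : Finset V := Finset.univ.filter fun b => ∃ a ∈ X, G.solid b a

/-- The mothers of `X`: nodes `b` with `b ⇢ a` in `G` for some `a ∈ X`. -/
def mo (X : Finset V) : Finset V := Finset.univ.filter fun b => ∃ a ∈ X, G.dashed b a

/-- The parents of `X`. -/
def pa (X : Finset V) : Finset V := G.fa X ∪ G.mo X

/-- The neighbors of `X`: nodes `b` with `b − a` in `G` for some `a ∈ X`. -/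
def nb (X : Finset V) : Finset V := Finset.univ.filter fun b => ∃ a ∈ X, G.und b a

/-- There is a descending route from `a` to `b`: all edges undirected or directed in the
direction of travel, containing at least one directed edge. -/
def descends (a b : V) : Prop :=
  ∃ (n : ℕ) (f : ℕ → V), f 0 = a ∧ f n = b ∧ (∀ i < n, G.fwd (f i) (f (i + 1))) ∧
    ∃ i < n, G.solid (f i) (f (i + 1)) ∨ G.dashed (f i) (f (i + 1))

/-- The non-descendants of `X`. -/
def nd (X : Finset V) : Finset V := Finset.univ.filter fun b => ¬ ∃ a ∈ X, G.descends a b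

/-- Connectivity by undirected routes. -/
def uconn : V → V → Prop := Relation.ReflTransGen G.und

/-- The chain component containing `i`. -/
def cc (i : V) : Finset V := Finset.univ.filter fun j => G.uconn i j

/-- The set of chain components of `G`. -/
def ccs : Finset (Finset V) := Finset.univ.image G.cc

/-- The nodes incident to some edge of `G`. -/
def verts : Finset V := Finset.univ.filter fun a => ∃ b, G.adj a b

/-- `π` is a topological ordering of the chain components: it is constant on components and
increases along directed edges. -/
def IsTopoOrder (π : V → ℕ) : Prop :=
  (∀ a b, G.uconn a b → π a = π b) ∧ ∀ a b, G.solid a b ∨ G.dashed a b → π a < π b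

/-- Equation 1: for every topological ordering of the chain components, each component `K`
is independent of the preceding components minus `Pa(K)` given `Pa(K)`. -/
def eq1 (S : Matrix V V ℝ) : Prop :=
  ∀ π : V → ℕ, G.IsTopoOrder π → ∀ i : V,
    gaussCI S (G.cc i) ((Finset.univ.filter fun b => π b < π i) \ G.pa (G.cc i))
      (G.pa (G.cc i))

/-- The regression coefficients `β_K = Σ_{K,Pa(K)} (Σ_{Pa(K),Pa(K)})⁻¹`. -/
def beta (S : Matrix V V ℝ) (K : Finset V) : Matrix K (G.pa K) ℝ :=
  msub S K (G.pa K) * (msub S (G.pa K) (G.pa K))⁻¹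

/-- The conditional covariance matrix `Λ_K`. -/
def lam (S : Matrix V V ℝ) (K : Finset V) : Matrix K K ℝ :=
  msub S K K - msub S K (G.pa K) * (msub S (G.pa K) (G.pa K))⁻¹ * msub S (G.pa K) K

/-- The precision matrix `Ω = (Σ_{K ∪ Pa(K), K ∪ Pa(K)})⁻¹`. -/
def om (S : Matrix V V ℝ) (K : Finset V) : Matrix ↥(K ∪ G.pa K) ↥(K ∪ G.pa K) ℝ :=
  (msub S (K ∪ G.pa K) (K ∪ G.pa K))⁻¹

/-- Equation 6: `(β_K)_{i,j} = 0` for all `i ∈ K` and `j ∈ Mo(K) ∖ Mo(i)`. -/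
def eq6 (S : Matrix V V ℝ) : Prop :=
  ∀ K ∈ G.ccs, ∀ i (hi : i ∈ K), ∀ j (hj : j ∈ G.pa K),
    j ∈ G.mo K → j ∉ G.mo {i} → G.beta S K ⟨i, hi⟩ ⟨j, hj⟩ = 0

/-- Equation 7: `Ω_{i,j} = 0` for all `i ∈ K` and `j ∈ Fa(K) ∖ Fa(i)`. -/
def eq7 (S : Matrix V V ℝ) : Prop :=
  ∀ K ∈ G.ccs, ∀ i (hi : i ∈ K), ∀ j (hj : j ∈ G.pa K),
    j ∈ G.fa K → j ∉ G.fa {i} →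
    G.om S K ⟨i, Finset.mem_union_left _ hi⟩ ⟨j, Finset.mem_union_right _ hj⟩ = 0

/-- Equation 8: `(Λ_K⁻¹)_{i,j} = 0` for all `i ∈ K` and `j ∈ K ∖ ({i} ∪ Ne(i))`. -/
def eq8 (S : Matrix V V ℝ) : Prop :=
  ∀ K ∈ G.ccs, ∀ i (hi : i ∈ K), ∀ j (hj : j ∈ K),
    j ≠ i → j ∉ G.nb {i} → (G.lam S K)⁻¹ ⟨i, hi⟩ ⟨j, hj⟩ = 0

/-- `p` satisfies Equation 1 and the zero restrictions of Equations 6–8 w.r.t. `G`. -/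
def eqs (S : Matrix V V ℝ) : Prop := G.eq1 S ∧ G.eq6 S ∧ G.eq7 S ∧ G.eq8 S

/-- The global Markov property with respect to `G`, for an abstract ternary
(conditional-independence) relation `I`. -/
def globalMP (I : Finset V → Finset V → Finset V → Prop) : Prop :=
  ∀ X Y Z : Finset V, PDisj X Y Z → G.Sep X Y Z → I X Y Z

/-- The block-recursive Markov property (B1)–(B3) with respect to `G`. -/
def blockRecMP (I : Finset V → Finset V → Finset V → Prop) : Prop :=
  ∀ K ∈ G.ccs, ∀ i ∈ K,
    I {i} (((G.nd K \ K) \ G.fa K) \ G.mo {i}) (G.fa K ∪ G.mo {i}) ∧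
    I {i} (((G.nd K \ K) \ G.fa {i}) \ G.mo K) ((K \ {i}) ∪ G.fa {i} ∪ G.mo K) ∧
    ∀ j ∈ K, j ≠ i → j ∉ G.nb {i} → I {i} {j} ((K \ {i, j}) ∪ G.pa K)

/-- The pairwise Markov property (P1)–(P2) with respect to `G`. -/
def pairwiseMP (I : Finset V → Finset V → Finset V → Prop) : Prop :=
  ∀ i j : V, i ≠ j → ¬ G.adj i j → ∀ K ∈ G.ccs, i ∈ K →
    (j ∈ ((G.nd {i} \ K) \ G.fa K) \ G.mo {i} → I {i} {j} ((G.nd {i} \ K) \ {j})) ∧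
    (j ∈ ((G.nd {i} \ {i}) \ G.fa {i}) \ G.mo K → I {i} {j} (G.nd {i} \ {i, j}))

/-- The local Markov property (L1)–(L2) with respect to `G`. -/
def localMP (I : Finset V → Finset V → Finset V → Prop) : Prop :=
  ∀ K ∈ G.ccs, ∀ i ∈ K,
    I {i} (((G.nd {i} \ K) \ G.fa K) \ G.mo {i}) (G.fa K ∪ G.mo {i}) ∧
    I {i} ((((G.nd {i} \ {i}) \ G.pa {i}) \ G.nb {i}) \ G.mo (G.nb {i}))
      (G.pa {i} ∪ G.nb {i} ∪ G.mo (G.nb {i}))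

/-- The subgraph `G^U`: it keeps the edge `A ⊸ B` (with its type and orientation) iff `G`
has a route `A ⊸ B ⊸ ⋯ ⊸ C` with `C ∈ U`, all edges undirected or directed in the
direction of travel, and no subroute `R ⇢ S − T`. -/
def goodFrom (U : Finset V) (a b : V) : Prop :=
  ∃ (f : ℕ → V) (n : ℕ), 1 ≤ n ∧ f 0 = a ∧ f 1 = b ∧ f n ∈ U ∧
    (∀ i < n, G.fwd (f i) (f (i + 1))) ∧
    ∀ i, i + 2 ≤ n → ¬ (G.dashed (f i) (f (i + 1)) ∧ G.und (f (i + 1)) (f (i + 2)))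

/-- The graph `G^U`. -/
def derived (U : Finset V) : PreGraph V where
  undir a b := G.undir a b ∧ G.goodFrom U a b
  solid a b := G.solid a b ∧ G.goodFrom U a b
  dashed a b := G.dashed a b ∧ G.goodFrom U a b

/-- The set `Y'` used in Lemmas 2 and 3:
`Y' = {B' ∈ V(G^{X∪Y∪Z}) ∖ (X ∪ Z) : X ⊥_{G^{X∪Y∪Z}} B' | Z}`. -/
def derivedYp (X Y Z : Finset V) : Finset V :=
  ((G.derived (X ∪ Y ∪ Z)).verts \ (X ∪ Z)).filter fun b =>
    (G.derived (X ∪ Y ∪ Z)).Sep X {b} Z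

/-- The set `X' = V(G^{X∪Y∪Z}) ∖ (Y' ∪ Z)` used in Lemmas 2 and 3. -/
def derivedXp (X Y Z : Finset V) : Finset V :=
  (G.derived (X ∪ Y ∪ Z)).verts \ (G.derivedYp X Y Z ∪ Z)

end Finite

end PreGraph

/-- A chain graph: at most one edge between any pair of distinct nodes (undirected, solid
directed, or dashed directed) and no semidirected cycles. -/
structure ChainGraph (V : Type*) extends PreGraph V where
  undir_symm : ∀ a b, toPreGraph.undir a b → toPreGraph.undir b a
  undir_irrefl : ∀ a, ¬ toPreGraph.undir a a
  solid_irrefl : ∀ a, ¬ toPreGraph.solid a a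
  dashed_irrefl : ∀ a, ¬ toPreGraph.dashed a a
  undir_not_solid : ∀ a b, toPreGraph.undir a b → ¬ toPreGraph.solid a b
  undir_not_dashed : ∀ a b, toPreGraph.undir a b → ¬ toPreGraph.dashed a b
  solid_not_solid : ∀ a b, toPreGraph.solid a b → ¬ toPreGraph.solid b a
  solid_not_dashed : ∀ a b, toPreGraph.solid a b → ¬ toPreGraph.dashed a b
  solid_not_dashed_rev : ∀ a b, toPreGraph.solid a b → ¬ toPreGraph.dashed b a
  dashed_not_dashed : ∀ a b, toPreGraph.dashed a b → ¬ toPreGraph.dashed b a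
  no_semidirected_cycle : ¬ ∃ (f : ℕ → V) (n : ℕ), 1 ≤ n ∧ f n = f 0 ∧
    (toPreGraph.solid (f 0) (f 1) ∨ toPreGraph.dashed (f 0) (f 1)) ∧
    ∀ i < n, toPreGraph.fwd (f i) (f (i + 1))

namespace ChainGraph

variable (G : ChainGraph V)

/-- An LWF chain graph: no dashed directed edges. -/
def IsLWF : Prop := ∀ a b, ¬ G.toPreGraph.dashed a b

/-- An AMP chain graph: no solid directed edges. -/
def IsAMP : Prop := ∀ a b, ¬ G.toPreGraph.solid a b

/-- A unified chain graph: `Fa(K) ∩ Mo(K) = ∅` for every chain component `K`. -/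
def IsUCG [Fintype V] [DecidableEq V] : Prop :=
  ∀ K ∈ G.toPreGraph.ccs, Disjoint (G.toPreGraph.fa K) (G.toPreGraph.mo K)

end ChainGraph


/-- The AMP chain graph obtained from `G` by deleting every solid directed edge. -/
def ChainGraph.dropSolid (G : ChainGraph V) : ChainGraph V where
  undir := G.toPreGraph.undir
  solid _ _ := False
  dashed := G.toPreGraph.dashed
  undir_symm := G.undir_symm
  undir_irrefl := G.undir_irrefl
  solid_irrefl _ h := h
  dashed_irrefl := G.dashed_irrefl
  undir_not_solid _ _ _ h := h
  undir_not_dashed := G.undir_not_dashed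
  solid_not_solid _ _ h := h.elim
  solid_not_dashed _ _ h := h.elim
  solid_not_dashed_rev _ _ h := h.elim
  dashed_not_dashed := G.dashed_not_dashed
  no_semidirected_cycle := fun ⟨f, n, hn, hcyc, hstart, hsteps⟩ =>
    G.no_semidirected_cycle ⟨f, n, hn, hcyc, Or.inr (hstart.resolve_left id),
      fun i hi => (hsteps i hi).imp id (Or.imp False.elim id)⟩

/-- The restriction of `ω : V → ℝ` to the coordinates in `S`. -/
def marg (S : Finset V) : (V → ℝ) → (S → ℝ) := fun ω s => ω s.1

lemma marg_measurable (S : Finset V) : Measurable (marg (V := V) S) :=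
  measurable_pi_lambda _ fun s => measurable_pi_apply s.1

/-- Conditional independence of the coordinate tuples indexed by `X` and `Y` given the
coordinate tuple indexed by `Z`, for a distribution `μ` on `ℝ^V`. -/
def mCI [Fintype V] (μ : Measure (V → ℝ)) [IsFiniteMeasure μ] (X Y Z : Finset V) : Prop :=
  CondIndepFun (MeasurableSpace.comap (marg Z) inferInstance) ((marg_measurable Z).comap_le)
    (marg X) (marg Y) μ

/-- A probability distribution `μ` on `ℝ^V` satisfies the global Markov property with
respect to `G`. -/
def measGlobalMarkov [Fintype V] [DecidableEq V] (G : PreGraph V) (μ : Measure (V → ℝ))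
    [IsFiniteMeasure μ] : Prop :=
  ∀ X Y Z : Finset V, PDisj X Y Z → G.Sep X Y Z → mCI μ X Y Z

/-- A graphoid over `V`: a ternary relation on pairwise disjoint subsets of `V` satisfying
symmetry, decomposition, weak union, contraction and intersection. -/
structure Graphoid (V : Type*) [DecidableEq V] where
  rel : Finset V → Finset V → Finset V → Prop
  symmetry : ∀ X Y Z : Finset V, PDisj X Y Z → rel X Y Z → rel Y X Z
  decomposition : ∀ X Y W Z : Finset V, PDisj4 X Y W Z → rel X (Y ∪ W) Z → rel X Y Z
  weakUnion : ∀ X Y W Z : Finset V, PDisj4 X Y W Z → rel X (Y ∪ W) Z → rel X Y (Z ∪ W)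
  contraction : ∀ X Y W Z : Finset V, PDisj4 X Y W Z →
    rel X Y (Z ∪ W) → rel X W Z → rel X (Y ∪ W) Z
  intersection : ∀ X Y W Z : Finset V, PDisj4 X Y W Z →
    rel X Y (Z ∪ W) → rel X W (Z ∪ Y) → rel X (Y ∪ W) Z

/-- The conditional variance `Σ_{a,a|B} = Σ_{a,a} − Σ_{a,B} (Σ_{B,B})⁻¹ Σ_{B,a}`. -/
def condVar [Fintype V] [DecidableEq V] (S : Matrix V V ℝ) (a : V) (B : Finset V) : ℝ :=
  S a a - ∑ b₁ : B, ∑ b₂ : B, S a b₁.1 * (msub S B B)⁻¹ b₁ b₂ * S b₂.1 a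

set_option linter.unusedSectionVars false
set_option linter.unusedVariables false
set_option maxHeartbeats 1000000

section Core
variable [Fintype V] [DecidableEq V] (S : Matrix V V ℝ)

def rowC (C : Finset V) (a : V) : C → ℝ := fun c => S a c.1

def gam (C : Finset V) (a : V) : C → ℝ := rowC S C a ᵥ* (msub S C C)⁻¹

def kcov (C : Finset V) (a b : V) : ℝ :=
  S a b - ∑ c : C, gam S C a c * S c.1 b

def qres (C : Finset V) (a : V) : V → ℝ := fun v =>
  (if v = a then 1 else 0) - (if h : v ∈ C then gam S C a ⟨v, h⟩ else 0)

lemma sum_dite_mul (C : Finset V) (F : C → ℝ) (g : V → ℝ) :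
    ∑ v : V, (if h : v ∈ C then F ⟨v, h⟩ else 0) * g v = ∑ c : C, F c * g c.1 := by
  calc ∑ v : V, (if h : v ∈ C then F ⟨v,h⟩ else 0) * g v
      = ∑ v ∈ C, (if h : v ∈ C then F ⟨v,h⟩ else 0) * g v :=
        (Finset.sum_subset (Finset.subset_univ C) (by intro x _ hx; simp [hx])).symm
    _ = ∑ c ∈ C.attach, (if h : (c : V) ∈ C then F ⟨c,h⟩ else 0) * g c :=
        (Finset.sum_attach C _).symm
    _ = ∑ c : C, F c * g c.1 := by
        rw [Finset.univ_eq_attach]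
        exact Finset.sum_congr rfl fun c _ => by rw [dif_pos c.2]

lemma qres_vecMul (C : Finset V) (a b : V) :
    (qres S C a ᵥ* S) b = kcov S C a b := by
  have : (qres S C a ᵥ* S) b
      = ∑ v : V, ((if v = a then (1:ℝ) else 0) - (if h : v ∈ C then gam S C a ⟨v, h⟩ else 0)) * S v b := by
    simp [vecMul, dotProduct, qres]
  rw [this]
  simp only [sub_mul, Finset.sum_sub_distrib]
  rw [sum_dite_mul]
  congr 1
  simp [ite_mul]

lemma msub_posDef {S : Matrix V V ℝ} (hS : S.PosDef) (C : Finset V) :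
    (msub S C C).PosDef := by
  refine Matrix.PosDef.of_dotProduct_mulVec_pos ?_ ?_
  · ext c d
    exact congrFun (congrFun hS.1 c.1) d.1
  · intro x hx
    set y : V → ℝ := fun v => if h : v ∈ C then x ⟨v, h⟩ else 0 with hy
    have hyne : y ≠ 0 := by
      intro h0
      apply hx
      funext c
      have := congrFun h0 c.1
      simpa [hy, c.2] using this
    have inner : ∀ v, (∑ w : V, S v w * y w) = ∑ c : C, x c * S v c.1 := by
      intro v
      rw [show (∑ w : V, S v w * y w)
          = ∑ w : V, (if h : w ∈ C then x ⟨w,h⟩ else 0) * S v w by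
            apply Finset.sum_congr rfl; intro w _; simp [hy, mul_comm]]
      exact sum_dite_mul C (fun c => x c) (fun w => S v w)
    have key : dotProduct (star x) ((msub S C C) *ᵥ x) = dotProduct (star y) (S *ᵥ y) := by
      simp only [star_trivial, dotProduct, mulVec]
      calc ∑ c : C, x c * ∑ d : C, msub S C C c d * x d
          = ∑ c : C, x c * ∑ w : V, S c.1 w * y w := by
            apply Finset.sum_congr rfl; intro c _
            rw [inner c.1]
            congr 1
            apply Finset.sum_congr rfl; intro d _
            simp [msub, mul_comm]
        _ = ∑ v : V, y v * ∑ w : V, S v w * y w := by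
            rw [show (∑ v : V, y v * ∑ w : V, S v w * y w)
                = ∑ v : V, (if h : v ∈ C then x ⟨v,h⟩ else 0) * (∑ w : V, S v w * y w) by
                  apply Finset.sum_congr rfl; intro v _; simp [hy]]
            rw [sum_dite_mul C (fun c => x c) (fun v => ∑ w : V, S v w * y w)]
    rw [key]
    exact hS.dotProduct_mulVec_pos hyne

lemma kcov_mem_zero {S : Matrix V V ℝ} (hS : S.PosDef) {C : Finset V} (a : V) {c : V}
    (hc : c ∈ C) : kcov S C a c = 0 := by
  have hdet : IsUnit (msub S C C).det := (msub_posDef hS C).det_pos.ne'.isUnit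
  have hinv : gam S C a ᵥ* (msub S C C) = rowC S C a := by
    rw [gam, vecMul_vecMul, Matrix.nonsing_inv_mul _ hdet, vecMul_one]
  have : (∑ c' : C, gam S C a c' * S c'.1 c) = (gam S C a ᵥ* (msub S C C)) ⟨c, hc⟩ := by
    simp [vecMul, dotProduct, msub]
  rw [kcov, this, hinv, rowC, sub_self]

lemma qres_orth {S : Matrix V V ℝ} (hS : S.PosDef) {C : Finset V} (a : V) {c : V}
    (hc : c ∈ C) : (qres S C a ᵥ* S) c = 0 := by
  rw [qres_vecMul]; exact kcov_mem_zero hS a hc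

/-- support of qres -/
lemma qres_support (C : Finset V) (a v : V) (hv : v ∉ C) (hva : v ≠ a) :
    qres S C a v = 0 := by simp [qres, hv, hva]

lemma qres_self (C : Finset V) (a : V) (ha : a ∉ C) : qres S C a a = 1 := by
  simp [qres, ha]

/-- uniqueness / characterization -/
lemma kcov_char {S : Matrix V V ℝ} (hS : S.PosDef) {C : Finset V} {a : V} (q : V → ℝ)
    (hqa : ∀ v, v ∉ C → q v = (if v = a then 1 else 0))
    (horth : ∀ c ∈ C, (q ᵥ* S) c = 0) (b : V) :
    kcov S C a b = (q ᵥ* S) b := by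
  set d : V → ℝ := q - qres S C a with hd
  have hdsupp : ∀ v, v ∉ C → d v = 0 := by
    intro v hv
    by_cases hva : v = a
    · subst hva; simp [hd, hqa v hv, qres, dif_neg hv]
    · simp [hd, hqa v hv, hva, qres_support S C a v hv hva]
  have hdorth : ∀ c ∈ C, (d ᵥ* S) c = 0 := by
    intro c hc
    rw [hd, sub_vecMul]
    simp [horth c hc, qres_orth hS a hc]
  have hzero : dotProduct (star d) (S *ᵥ d) = 0 := by
    rw [star_trivial, dotProduct_mulVec]
    apply Finset.sum_eq_zero
    intro v _
    by_cases hv : v ∈ C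
    · rw [hdorth v hv, zero_mul]
    · rw [hdsupp v hv, mul_zero]
  have hd0 : d = 0 := by
    by_contra h
    exact absurd hzero (ne_of_gt (hS.dotProduct_mulVec_pos h))
  have : q = qres S C a := by
    funext v; have := congrFun hd0 v; simpa [hd, sub_eq_zero] using this
  rw [this, qres_vecMul]

lemma kcov_pos {S : Matrix V V ℝ} (hS : S.PosDef) {C : Finset V} {a : V} (ha : a ∉ C) :
    0 < kcov S C a a := by
  have h1 : kcov S C a a = dotProduct (star (qres S C a)) (S *ᵥ qres S C a) := by
    rw [star_trivial, dotProduct_mulVec]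
    rw [show dotProduct (qres S C a ᵥ* S) (qres S C a)
        = ∑ v : V, (qres S C a ᵥ* S) v * qres S C a v from rfl]
    rw [Finset.sum_eq_single a]
    · rw [qres_self S C a ha, mul_one, qres_vecMul]
    · intro v _ hva
      by_cases hv : v ∈ C
      · rw [qres_orth hS a hv, zero_mul]
      · rw [qres_support S C a v hv hva, mul_zero]
    · intro h; exact absurd (Finset.mem_univ a) h
  rw [h1]
  apply hS.dotProduct_mulVec_pos
  intro h
  have := congrFun h a
  rw [qres_self S C a ha] at this
  simp at this

lemma kcov_insert {S : Matrix V V ℝ} (hS : S.PosDef) {C : Finset V} {w : V} (hw : w ∉ C)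
    (a b : V) :
    kcov S (insert w C) a b
      = kcov S C a b - kcov S C a w * kcov S C w b / kcov S C w w := by
  have hww : kcov S C w w ≠ 0 := (kcov_pos hS hw).ne'
  set lam := kcov S C a w / kcov S C w w with hlam
  set q : V → ℝ := qres S C a - lam • qres S C w with hq
  have hqa : ∀ v, v ∉ insert w C → q v = (if v = a then 1 else 0) := by
    intro v hv
    have hvC : v ∉ C := fun h => hv (Finset.mem_insert_of_mem h)
    have hvw : v ≠ w := fun h => hv (h ▸ Finset.mem_insert_self w C)
    by_cases hva : v = a
    · subst hva
      simp [hq, qres, dif_neg hvC, hvw, if_pos]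
    · simp [hq, qres_support S C a v hvC hva, qres_support S C w v hvC hvw, hva]
  have horth : ∀ c ∈ insert w C, (q ᵥ* S) c = 0 := by
    intro c hc
    rw [hq, sub_vecMul, smul_vecMul]
    rcases Finset.mem_insert.mp hc with h | h
    · subst h
      simp only [Pi.sub_apply, Pi.smul_apply, qres_vecMul, smul_eq_mul, hlam]
      field_simp
      ring
    · simp [qres_orth hS a h, qres_orth hS w h]
  have := kcov_char hS q hqa horth b
  rw [this, hq, sub_vecMul, smul_vecMul]
  simp only [Pi.sub_apply, Pi.smul_apply, qres_vecMul, smul_eq_mul, hlam]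
  ring

lemma k_addR {S : Matrix V V ℝ} (hS : S.PosDef) {C : Finset V} {w a b : V} (hw : w ∉ C)
    (h1 : kcov S C w b = 0) (h2 : kcov S C a b = 0) : kcov S (insert w C) a b = 0 := by
  rw [kcov_insert hS hw, h1, h2, mul_zero, zero_div, sub_zero]

lemma k_addL {S : Matrix V V ℝ} (hS : S.PosDef) {C : Finset V} {w a b : V} (hw : w ∉ C)
    (h1 : kcov S C a w = 0) (h2 : kcov S C a b = 0) : kcov S (insert w C) a b = 0 := by
  rw [kcov_insert hS hw, h1, h2, zero_mul, zero_div, sub_zero]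

lemma k_rem {S : Matrix V V ℝ} (hS : S.PosDef) {C : Finset V} {w a b : V} (hw : w ∉ C)
    (h1 : kcov S C a w = 0) (h2 : kcov S (insert w C) a b = 0) : kcov S C a b = 0 := by
  rw [kcov_insert hS hw, h1, zero_mul, zero_div, sub_zero] at h2
  exact h2

lemma k_int {S : Matrix V V ℝ} (hS : S.PosDef) {C : Finset V} {a j w : V}
    (hw : w ∉ C) (hj : j ∉ C) (hjw : j ≠ w)
    (h1 : kcov S (insert w C) a j = 0) (h2 : kcov S (insert j C) a w = 0) :
    kcov S C a j = 0 := by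
  have hr : 0 < kcov S C j j := kcov_pos hS hj
  have hs : 0 < kcov S C w w := kcov_pos hS hw
  have hcs : 0 < kcov S (insert w C) j j := kcov_pos hS (by simp [hjw, hj])
  rw [kcov_insert hS hw] at h1 hcs
  rw [kcov_insert hS hj] at h2
  set x := kcov S C a j
  set y := kcov S C a w
  set p := kcov S C j w
  set q := kcov S C w j
  set r := kcov S C j j
  set s := kcov S C w w
  have e1 : x * s = y * q := by field_simp at h1; linarith
  have e2 : y * r = x * p := by field_simp at h2; linarith
  have e3 : r * s - p * q > 0 := by
    have : r - p * q / s > 0 := hcs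
    have := mul_pos this hs
    calc r * s - p * q = (r - p * q / s) * s := by field_simp
      _ > 0 := by positivity
  have key : x * (r * s - p * q) = 0 := by
    have : x * s * r = y * q * r := by rw [e1]
    have : x * s * r = q * (x * p) := by rw [this, ← e2]; ring
    nlinarith [this]
  rcases mul_eq_zero.mp key with h | h
  · exact h
  · exact absurd h (ne_of_gt e3)

/-- weak-union style: add a set `W` to the conditioning set when `a ⟂ w` for all `w ∈ W`. -/
lemma k_wu {S : Matrix V V ℝ} (hS : S.PosDef) {C : Finset V} {a : V} (W : Finset V)
    (hWC : ∀ w ∈ W, w ∉ C) (hz : ∀ w ∈ W, kcov S C a w = 0) :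
    ∀ j, j ∉ W → kcov S C a j = 0 → kcov S (C ∪ W) a j = 0 := by
  induction W using Finset.induction_on with
  | empty => intro j _ h; simpa using h
  | @insert w W' hwW' ih =>
    intro j hj hja
    have hwC : w ∉ C := hWC w (Finset.mem_insert_self w W')
    have hz' : ∀ u ∈ W', kcov S C a u = 0 := fun u hu => hz u (Finset.mem_insert_of_mem hu)
    have hWC' : ∀ u ∈ W', u ∉ C := fun u hu => hWC u (Finset.mem_insert_of_mem hu)
    have hjW' : j ∉ W' := fun h => hj (Finset.mem_insert_of_mem h)
    have hjw : j ≠ w := fun h => hj (h ▸ Finset.mem_insert_self w W')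
    have h1 : kcov S (C ∪ W') a j = 0 := ih hWC' hz' j hjW' hja
    have h2 : kcov S (C ∪ W') a w = 0 :=
      ih hWC' hz' w hwW' (hz w (Finset.mem_insert_self w W'))
    have hwCW : w ∉ C ∪ W' := by simp [hwC, hwW']
    have : kcov S (insert w (C ∪ W')) a j = 0 := k_addL hS hwCW h2 h1
    rw [Finset.union_insert]; exact this

/-- composition style: add a set `W` to the conditioning when `w ⟂ b` for all `w ∈ W`. -/
lemma k_as {S : Matrix V V ℝ} (hS : S.PosDef) {C : Finset V} {b : V} (W : Finset V)
    (hWC : ∀ w ∈ W, w ∉ C) (hz : ∀ w ∈ W, kcov S C w b = 0) :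
    ∀ a, kcov S C a b = 0 → kcov S (C ∪ W) a b = 0 := by
  induction W using Finset.induction_on with
  | empty => intro a h; simpa using h
  | @insert w W' hwW' ih =>
    intro a hab
    have hz' : ∀ u ∈ W', kcov S C u b = 0 := fun u hu => hz u (Finset.mem_insert_of_mem hu)
    have hWC' : ∀ u ∈ W', u ∉ C := fun u hu => hWC u (Finset.mem_insert_of_mem hu)
    have h1 : kcov S (C ∪ W') a b = 0 := ih hWC' hz' a hab
    have h2 : kcov S (C ∪ W') w b = 0 :=
      ih hWC' hz' w (hz w (Finset.mem_insert_self w W'))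
    have hwCW : w ∉ C ∪ W' := by
      simp [hWC w (Finset.mem_insert_self w W'), hwW']
    have : kcov S (insert w (C ∪ W')) a b = 0 := k_addR hS hwCW h2 h1
    rw [Finset.union_insert]; exact this

/-- intersection style: from full-conditioning pairwise facts, reduce the conditioning. -/
lemma k_mint {S : Matrix V V ℝ} (hS : S.PosDef) {X B : Finset V} {a : V}
    (haX : a ∉ X) (hB : B ⊆ X)
    (hfull : ∀ j ∈ B, kcov S (X \ {j}) a j = 0) :
    ∀ T, T ⊆ B → ∀ j ∈ T, kcov S (X \ T) a j = 0 := by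
  intro T
  induction T using Finset.strongInduction with
  | _ T ih =>
    intro hTB j hjT
    by_cases hT : T = {j}
    · subst hT
      exact hfull j (hTB (Finset.mem_singleton_self j))
    · have hex : ∃ w ∈ T, w ≠ j := by
        by_contra h
        push_neg at h
        exact hT (Finset.eq_singleton_iff_unique_mem.mpr ⟨hjT, fun w hw => h w hw⟩)
      obtain ⟨w, hwT, hwj⟩ := hex
      have hjX : j ∈ X := hB (hTB hjT)
      have hwX : w ∈ X := hB (hTB hwT)
      have hjw : j ≠ w := hwj.symm
      have hid1 : X \ T.erase w = insert w (X \ T) := by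
        ext x
        simp only [Finset.mem_sdiff, Finset.mem_erase, Finset.mem_insert]
        constructor
        · rintro ⟨hx, hxe⟩
          by_cases hxw : x = w
          · exact Or.inl hxw
          · exact Or.inr ⟨hx, fun hxT => hxe ⟨hxw, hxT⟩⟩
        · rintro (rfl | ⟨hx, hxT⟩)
          · exact ⟨hwX, fun he => he.1 rfl⟩
          · exact ⟨hx, fun he => hxT he.2⟩
      have hid2 : X \ T.erase j = insert j (X \ T) := by
        ext x
        simp only [Finset.mem_sdiff, Finset.mem_erase, Finset.mem_insert]
        constructor
        · rintro ⟨hx, hxe⟩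
          by_cases hxj : x = j
          · exact Or.inl hxj
          · exact Or.inr ⟨hx, fun hxT => hxe ⟨hxj, hxT⟩⟩
        · rintro (rfl | ⟨hx, hxT⟩)
          · exact ⟨hjX, fun he => he.1 rfl⟩
          · exact ⟨hx, fun he => hxT he.2⟩
      have h1 : kcov S (insert w (X \ T)) a j = 0 := by
        rw [← hid1]
        exact ih _ (Finset.erase_ssubset hwT) ((Finset.erase_subset w T).trans hTB) j
          (Finset.mem_erase.mpr ⟨hjw, hjT⟩)
      have h2 : kcov S (insert j (X \ T)) a w = 0 := by
        rw [← hid2]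
        exact ih _ (Finset.erase_ssubset hjT) ((Finset.erase_subset j T).trans hTB) w
          (Finset.mem_erase.mpr ⟨hwj, hwT⟩)
      exact k_int hS (by simp [hwT]) (by simp [hjT]) hjw h1 h2

lemma gaussCI_entry (S : Matrix V V ℝ) (i : V) (B Z : Finset V)
    (p : ({i} : Finset V)) (q : B) :
    (msub S {i} B - msub S {i} Z * (msub S Z Z)⁻¹ * msub S Z B) p q
      = kcov S Z i q.1 := by
  have hp : p.1 = i := Finset.mem_singleton.mp p.2
  simp only [Matrix.sub_apply, msub, Matrix.mul_apply, kcov, gam, rowC, vecMul, dotProduct,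
    Matrix.of_apply, hp]

lemma gaussCI_singleton_iff (S : Matrix V V ℝ) (i : V) (B Z : Finset V) :
    gaussCI S {i} B Z ↔ ∀ j, (hj : j ∈ B) → kcov S Z i j = 0 := by
  constructor
  · intro h j hj
    have := congrFun (congrFun h ⟨i, Finset.mem_singleton_self i⟩) ⟨j, hj⟩
    rw [gaussCI_entry] at this
    simpa using this
  · intro h
    funext p q
    rw [gaussCI_entry]
    simpa using h q.1 q.2


/-! ### Auxiliary machinery for Theorem 6 -/

section AuxWalk

variable {V : Type*}

/-- Splice two ℕ-indexed walks. -/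
def spl (f : ℕ → V) (m : ℕ) (g : ℕ → V) : ℕ → V := fun t => if t ≤ m then f t else g (t - m)

lemma spl_left {f : ℕ → V} {m : ℕ} {g : ℕ → V} (t : ℕ) (h : t ≤ m) : spl f m g t = f t :=
  if_pos h

lemma spl_right {f : ℕ → V} {m : ℕ} {g : ℕ → V} (hfg : f m = g 0) (t : ℕ) (h : m ≤ t) :
    spl f m g t = g (t - m) := by
  by_cases h' : t ≤ m
  · have ht : t = m := le_antisymm h' h
    subst ht
    simp [spl, hfg]
  · exact if_neg h'

lemma spl_fwd {P : V → V → Prop} {f : ℕ → V} {m : ℕ} {g : ℕ → V} {k : ℕ} (hfg : f m = g 0)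
    (hf : ∀ t < m, P (f t) (f (t+1))) (hg : ∀ t < k, P (g t) (g (t+1))) :
    ∀ t < m + k, P (spl f m g t) (spl f m g (t+1)) := by
  intro t ht
  by_cases h1 : t + 1 ≤ m
  · rw [spl_left t (by omega), spl_left (t+1) h1]
    exact hf t (by omega)
  · rw [spl_right hfg (t+1) (by omega)]
    by_cases h2 : t ≤ m
    · have htm : t = m := by omega
      subst htm
      rw [spl_left t le_rfl, show t + 1 - t = 1 by omega, hfg]
      exact hg 0 (by omega)
    · rw [spl_right hfg t (by omega), show t + 1 - m = (t - m) + 1 by omega]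
      exact hg (t - m) (by omega)

end AuxWalk

section AuxGraph

variable {V : Type*} [Fintype V] [DecidableEq V] (G : ChainGraph V)

lemma aux_noClosed (f : ℕ → V) (n : ℕ) (hn : 1 ≤ n) (hcl : f n = f 0)
    (hfwd : ∀ t < n, G.toPreGraph.fwd (f t) (f (t+1))) (s : ℕ) (hs : s < n)
    (hdir : G.toPreGraph.solid (f s) (f (s+1)) ∨ G.toPreGraph.dashed (f s) (f (s+1))) :
    False := by
  set g : ℕ → V := fun t => if s + t < n then f (s + t) else f (s + t - n) with hg
  have gv1 : ∀ t, s + t ≤ n → g t = f (s + t) := by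
    intro t h
    by_cases h' : s + t < n
    · simp only [hg, if_pos h']
    · have he : s + t = n := by omega
      simp only [hg, if_neg h']
      rw [show s + t - n = 0 by omega, ← hcl, he]
  have gv2 : ∀ t, n ≤ s + t → g t = f (s + t - n) := by
    intro t h
    by_cases h' : s + t < n
    · omega
    · simp only [hg, if_neg h']
  apply G.no_semidirected_cycle
  refine ⟨g, n, hn, ?_, ?_, ?_⟩
  · rw [gv2 n (by omega), gv1 0 (by omega), show s + n - n = s by omega, show s + 0 = s by omega]
  · rw [gv1 0 (by omega), gv1 1 (by omega), show s + 0 = s by omega]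
    exact hdir
  · intro t ht
    by_cases h1 : s + t + 1 ≤ n
    · rw [gv1 t (by omega), gv1 (t+1) (by omega), show s + (t+1) = s + t + 1 by omega]
      exact hfwd (s + t) (by omega)
    · by_cases h2 : n ≤ s + t
      · rw [gv2 t h2, gv2 (t+1) (by omega), show s + (t+1) - n = (s + t - n) + 1 by omega]
        exact hfwd (s + t - n) (by omega)
      · omega

lemma aux_und_symm {G : ChainGraph V} {a b : V} (h : G.toPreGraph.und a b) :
    G.toPreGraph.und b a := h.symm

lemma aux_uconn_symm {G : ChainGraph V} {x y : V} (h : G.toPreGraph.uconn x y) :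
    G.toPreGraph.uconn y x := by
  induction h with
  | refl => exact Relation.ReflTransGen.refl
  | tail _ hbc ih => exact Relation.ReflTransGen.head (aux_und_symm hbc) ih

lemma aux_uconn_path {G : ChainGraph V} {x y : V} (h : G.toPreGraph.uconn x y) :
    ∃ (m : ℕ) (f : ℕ → V), f 0 = x ∧ f m = y ∧ ∀ t < m, G.toPreGraph.und (f t) (f (t+1)) := by
  induction h with
  | refl => exact ⟨0, fun _ => x, rfl, rfl, by omega⟩
  | @tail b c _ hbc ih =>
    obtain ⟨m, f, h0, hm, he⟩ := ih
    refine ⟨m + 1, fun t => if t ≤ m then f t else c, by simp [h0], by simp, ?_⟩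
    intro t ht
    by_cases h1 : t < m
    · simp only [if_pos (by omega : t ≤ m), if_pos (by omega : t + 1 ≤ m)]
      exact he t h1
    · have : t = m := by omega
      subst this
      simp only [if_pos (le_refl t), if_neg (by omega : ¬ t + 1 ≤ t), hm]
      exact hbc

/-- An undirected connection forbids descending the other way. -/
lemma aux_uconn_not_desc {G : ChainGraph V} {i k : V} (h : G.toPreGraph.uconn i k) :
    ¬ G.toPreGraph.descends i k := by
  rintro ⟨n, f, hf0, hfn, hfwd, s, hs, hdir⟩
  obtain ⟨m, g, hg0, hgm, hge⟩ := aux_uconn_path (aux_uconn_symm h)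
  have hfg : f n = g 0 := by rw [hfn, hg0]
  apply aux_noClosed G (spl f n g) (n + m) (by omega) ?_ ?_ s (by omega) ?_
  · rw [spl_right hfg (n + m) (by omega), show n + m - n = m by omega, hgm,
      spl_left 0 (by omega), hf0]
  · exact spl_fwd hfg hfwd (fun t ht => Or.inl (hge t ht))
  · rw [spl_left s (by omega), spl_left (s+1) (by omega)]
    exact hdir

/-- A node with a directed edge into the component of `i` is a non-descendant of `i`
and lies outside the component. -/
lemma aux_parent {G : ChainGraph V} {i a b : V} (hia : G.toPreGraph.uconn i a)
    (hb : G.toPreGraph.solid b a ∨ G.toPreGraph.dashed b a) :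
    ¬ G.toPreGraph.descends i b ∧ ¬ G.toPreGraph.uconn i b := by
  set e : ℕ → V := fun t => if t = 0 then b else a with he
  have he0 : e 0 = b := rfl
  have he1 : e 1 = a := rfl
  have hee : ∀ t < 1, G.toPreGraph.fwd (e t) (e (t+1)) := by
    intro t ht
    have : t = 0 := by omega
    subst this
    rw [he0, he1]
    exact Or.inr hb
  constructor
  · rintro ⟨n, f, hf0, hfn, hfwd, s, hs, hdir⟩
    obtain ⟨m, g, hg0, hgm, hge⟩ := aux_uconn_path (aux_uconn_symm hia)
    have hfe : f n = e 0 := by rw [hfn, he0]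
    have h1g : (spl f n e) (n + 1) = g 0 := by
      rw [spl_right hfe (n+1) (by omega), show n + 1 - n = 1 by omega, he1, hg0]
    apply aux_noClosed G (spl (spl f n e) (n+1) g) (n + 1 + m) (by omega) ?_ ?_ s (by omega) ?_
    · rw [spl_right h1g (n+1+m) (by omega), show n + 1 + m - (n+1) = m by omega, hgm,
        spl_left 0 (by omega), spl_left 0 (by omega), hf0]
    · exact spl_fwd h1g (spl_fwd hfe hfwd hee) (fun t ht => Or.inl (hge t ht))
    · rw [spl_left s (by omega), spl_left (s+1) (by omega),
        spl_left s (by omega), spl_left (s+1) (by omega)]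
      exact hdir
  · intro hib
    obtain ⟨m, g, hg0, hgm, hge⟩ :=
      aux_uconn_path (Relation.ReflTransGen.trans (aux_uconn_symm hia) hib)
    have hfe : e 1 = g 0 := by rw [he1, hg0]
    apply aux_noClosed G (spl e 1 g) (1 + m) (by omega) ?_ ?_ 0 (by omega) ?_
    · rw [spl_right hfe (1 + m) (by omega), show 1 + m - 1 = m by omega, hgm,
        spl_left 0 (by omega), he0]
    · exact spl_fwd hfe hee (fun t ht => Or.inl (hge t ht))
    · rw [spl_left 0 (by omega), spl_left 1 (by omega), he0, he1]
      exact hb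

lemma aux_descends_congr {G : ChainGraph V} {i c b : V} (h : G.toPreGraph.uconn i c)
    (hd : G.toPreGraph.descends c b) : G.toPreGraph.descends i b := by
  obtain ⟨n, f, hf0, hfn, hfwd, s, hs, hdir⟩ := hd
  obtain ⟨m, g, hg0, hgm, hge⟩ := aux_uconn_path h
  have hgf : g m = f 0 := by rw [hgm, hf0]
  refine ⟨m + n, spl g m f, by rw [spl_left 0 (by omega), hg0], ?_, ?_, m + s, by omega, ?_⟩
  · rw [spl_right hgf (m + n) (by omega), show m + n - m = n by omega, hfn]
  · exact spl_fwd hgf (fun t ht => Or.inl (hge t ht)) hfwd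
  · rw [spl_right hgf (m + s) (by omega), spl_right hgf (m + s + 1) (by omega),
      show m + s - m = s by omega, show m + s + 1 - m = s + 1 by omega]
    exact hdir

lemma aux_descends_single {G : ChainGraph V} {a b : V}
    (h : G.toPreGraph.solid a b ∨ G.toPreGraph.dashed a b) : G.toPreGraph.descends a b := by
  refine ⟨1, fun t => if t = 0 then a else b, rfl, rfl, ?_, 0, by omega, h⟩
  intro t ht
  have : t = 0 := by omega
  subst this
  exact Or.inr h

end AuxGraph


section Assembly

variable {V : Type*} [Fintype V] [DecidableEq V]

lemma aux_mem_cc {G : ChainGraph V} {i j : V} :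
    j ∈ G.toPreGraph.cc i ↔ G.toPreGraph.uconn i j := by
  simp [PreGraph.cc]

lemma aux_mem_fa {G : ChainGraph V} {X : Finset V} {b : V} :
    b ∈ G.toPreGraph.fa X ↔ ∃ a ∈ X, G.toPreGraph.solid b a := by
  simp [PreGraph.fa]

lemma aux_mem_mo {G : ChainGraph V} {X : Finset V} {b : V} :
    b ∈ G.toPreGraph.mo X ↔ ∃ a ∈ X, G.toPreGraph.dashed b a := by
  simp [PreGraph.mo]

lemma aux_mem_nb {G : ChainGraph V} {X : Finset V} {b : V} :
    b ∈ G.toPreGraph.nb X ↔ ∃ a ∈ X, G.toPreGraph.und b a := by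
  simp [PreGraph.nb]

lemma aux_mem_nd {G : ChainGraph V} {i b : V} :
    b ∈ G.toPreGraph.nd {i} ↔ ¬ G.toPreGraph.descends i b := by
  simp [PreGraph.nd]

lemma aux_mem_pa {G : ChainGraph V} {X : Finset V} {b : V} :
    b ∈ G.toPreGraph.pa X ↔
      (∃ a ∈ X, G.toPreGraph.solid b a) ∨ ∃ a ∈ X, G.toPreGraph.dashed b a := by
  simp [PreGraph.pa, aux_mem_fa, aux_mem_mo]

/-- In a component, every member is undirected-connected to every other. -/
lemma aux_uconn_of_mem {G : ChainGraph V} {K : Finset V} {i : V}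
    (hK : K ∈ G.toPreGraph.ccs) (hi : i ∈ K) : ∀ a ∈ K, G.toPreGraph.uconn i a := by
  obtain ⟨x, -, rfl⟩ := Finset.mem_image.mp hK
  intro a ha
  exact Relation.ReflTransGen.trans (aux_uconn_symm (aux_mem_cc.mp hi)) (aux_mem_cc.mp ha)

lemma aux_cc_closed {G : ChainGraph V} {K : Finset V} {i : V}
    (hK : K ∈ G.toPreGraph.ccs) (hi : i ∈ K) {b : V} (h : G.toPreGraph.uconn i b) : b ∈ K := by
  obtain ⟨x, -, rfl⟩ := Finset.mem_image.mp hK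
  exact aux_mem_cc.mpr (Relation.ReflTransGen.trans (aux_mem_cc.mp hi) h)

/-- Non-descendant status of members of `K`. -/
lemma aux_K_sub_nd {G : ChainGraph V} {K : Finset V} {i : V}
    (hK : K ∈ G.toPreGraph.ccs) (hi : i ∈ K) {k : V} (hk : k ∈ K) :
    k ∈ G.toPreGraph.nd {i} :=
  aux_mem_nd.mpr (aux_uconn_not_desc (aux_uconn_of_mem hK hi k hk))

/-- Parents of members of `K` are non-descendants of `i` and outside `K`. -/
lemma aux_par_nd {G : ChainGraph V} {K : Finset V} {i : V}
    (hK : K ∈ G.toPreGraph.ccs) (hi : i ∈ K) {a b : V} (ha : a ∈ K)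
    (h : G.toPreGraph.solid b a ∨ G.toPreGraph.dashed b a) :
    b ∈ G.toPreGraph.nd {i} ∧ b ∉ K := by
  have := aux_parent (aux_uconn_of_mem hK hi a ha) h
  exact ⟨aux_mem_nd.mpr this.1, fun hbK => this.2 (aux_uconn_of_mem hK hi b hbK)⟩

/-- Members of `K` have no directed edge to a non-descendant of `i`. -/
lemma aux_nochild {G : ChainGraph V} {K : Finset V} {i : V}
    (hK : K ∈ G.toPreGraph.ccs) (hi : i ∈ K) {a b : V} (ha : a ∈ K)
    (hb : b ∈ G.toPreGraph.nd {i})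
    (h : G.toPreGraph.solid a b ∨ G.toPreGraph.dashed a b) : False :=
  aux_mem_nd.mp hb
    (aux_descends_congr (aux_uconn_of_mem hK hi a ha) (aux_descends_single h))

lemma aux_nd_congr {G : ChainGraph V} {K : Finset V} {i : V}
    (hK : K ∈ G.toPreGraph.ccs) (hi : i ∈ K) {a : V} (ha : a ∈ K) :
    G.toPreGraph.nd {a} = G.toPreGraph.nd {i} := by
  have h := aux_uconn_of_mem hK hi a ha
  ext b
  rw [aux_mem_nd, aux_mem_nd]
  constructor
  · exact fun hb hd => hb (aux_descends_congr (aux_uconn_symm h) hd)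
  · exact fun hb hd => hb (aux_descends_congr h hd)

lemma aux_mk_nonadj {G : ChainGraph V} {i j : V}
    (h1 : ¬ G.toPreGraph.und i j) (h2 : ¬ G.toPreGraph.solid i j)
    (h3 : ¬ G.toPreGraph.solid j i) (h4 : ¬ G.toPreGraph.dashed i j)
    (h5 : ¬ G.toPreGraph.dashed j i) : ¬ G.toPreGraph.adj i j := by
  rintro (h | h | h | h | h) <;> tauto

end Assembly


section FinId

variable {V : Type*} [DecidableEq V]

lemma finid1 {N K P Q : Finset V} {j : V}
    (hP : ∀ x ∈ P, x ∈ N ∧ x ∉ K) (hQ : ∀ x ∈ Q, x ∈ N ∧ x ∉ K)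
    (hjP : j ∉ P) (hjQ : j ∉ Q) :
    (P ∪ Q) ∪ ((((N \ K) \ P) \ Q) \ {j}) = (N \ K) \ {j} := by
  ext x
  have h1 := hP x
  have h2 := hQ x
  simp only [Finset.mem_union, Finset.mem_sdiff, Finset.mem_singleton]
  by_cases hxj : x = j
  · subst hxj
    tauto
  · tauto

lemma finid2 {N P Q R : Finset V} {i j : V}
    (hP : ∀ x ∈ P, x ∈ N ∧ x ≠ i) (hQ : ∀ x ∈ Q, x ∈ N ∧ x ≠ i)
    (hR : ∀ x ∈ R, x ∈ N ∧ x ≠ i)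
    (hjP : j ∉ P) (hjQ : j ∉ Q) (hjR : j ∉ R) :
    (P ∪ Q ∪ R) ∪ (((((N \ {i}) \ P) \ Q) \ R) \ {j}) = N \ {i, j} := by
  ext x
  have h1 := hP x
  have h2 := hQ x
  have h3 := hR x
  simp only [Finset.mem_union, Finset.mem_sdiff, Finset.mem_singleton, Finset.mem_insert]
  by_cases hxj : x = j
  · subst hxj
    tauto
  · by_cases hxi : x = i
    · subst hxi
      tauto
    · tauto

end FinId

section FinId2

variable {V : Type*} [DecidableEq V]

lemma finid0 {N : Finset V} {i j : V} : N \ {i, j} = (N \ {i}) \ {j} := by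
  ext x
  simp only [Finset.mem_sdiff, Finset.mem_insert, Finset.mem_singleton]
  tauto

lemma finid3 {N K P Q : Finset V}
    (hP : ∀ x ∈ P, x ∈ N ∧ x ∉ K) (hQ : ∀ x ∈ Q, x ∈ N ∧ x ∉ K) :
    (N \ K) \ (((N \ K) \ P) \ Q) = P ∪ Q := by
  ext x
  have h1 := hP x
  have h2 := hQ x
  simp only [Finset.mem_sdiff, Finset.mem_union]
  tauto

lemma finid4 {N P Q R : Finset V} {i : V}
    (hP : ∀ x ∈ P, x ∈ N ∧ x ≠ i) (hQ : ∀ x ∈ Q, x ∈ N ∧ x ≠ i)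
    (hR : ∀ x ∈ R, x ∈ N ∧ x ≠ i) :
    (N \ {i}) \ ((((N \ {i}) \ P) \ Q) \ R) = P ∪ Q ∪ R := by
  ext x
  have h1 := hP x
  have h2 := hQ x
  have h3 := hR x
  simp only [Finset.mem_sdiff, Finset.mem_union, Finset.mem_singleton]
  tauto

lemma finid5 {N K ch : Finset V} {i j : V}
    (hKN : ∀ x ∈ K, x ∈ N) (hch : ∀ x ∈ ch, x ∈ K) (hiK : i ∈ K) (hjK : j ∉ K) :
    ((N \ K) \ {j}) ∪ ((K \ ch) \ {i}) = ((N \ {i}) \ {j}) \ ch := by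
  ext x
  have h1 := hKN x
  have h2 := hch x
  simp only [Finset.mem_sdiff, Finset.mem_union, Finset.mem_singleton]
  by_cases hxj : x = j
  · subst hxj; tauto
  · by_cases hxi : x = i
    · subst hxi; tauto
    · by_cases hxK : x ∈ K <;> tauto

lemma finid6 {N ch : Finset V} {i j : V} (hjN : j ∈ N) (hji : j ≠ i) (hjch : j ∉ ch) :
    insert j (((N \ {i}) \ {j}) \ ch) = (N \ {i}) \ ch := by
  ext x
  simp only [Finset.mem_insert, Finset.mem_sdiff, Finset.mem_singleton]
  by_cases hxj : x = j
  · subst hxj; tauto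
  · tauto

lemma finid7 {N ch : Finset V} {i j : V} (hch : ∀ x ∈ ch, x ∈ N ∧ x ≠ i) (hjch : j ∉ ch) :
    ((((N \ {i}) \ {j}) \ ch)) ∪ ch = (N \ {i}) \ {j} := by
  ext x
  have h1 := hch x
  simp only [Finset.mem_union, Finset.mem_sdiff, Finset.mem_singleton]
  by_cases hxj : x = j
  · subst hxj; tauto
  · tauto

end FinId2


section MainDir

variable {V : Type*} [Fintype V] [DecidableEq V]

lemma aux_fwd {G : ChainGraph V} {S : Matrix V V ℝ} (hS : S.PosDef)
    (hloc : G.toPreGraph.localMP (gaussCI S)) : G.toPreGraph.pairwiseMP (gaussCI S) := by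
  intro i j hij hnadj K hK hiK
  obtain ⟨hL1, hL2⟩ := hloc K hK i hiK
  constructor
  · -- (P1)
    intro hj
    have hj' := hj
    simp only [Finset.mem_sdiff] at hj'
    obtain ⟨⟨⟨hjN, hjK⟩, hjfa⟩, hjmo⟩ := hj'
    have hsc : ∀ w ∈ ((G.toPreGraph.nd {i} \ K) \ G.toPreGraph.fa K) \ G.toPreGraph.mo {i},
        kcov S (G.toPreGraph.fa K ∪ G.toPreGraph.mo {i}) i w = 0 :=
      fun w hw => (gaussCI_singleton_iff S i _ _).mp hL1 w hw
    have key := k_wu hS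
      ((((G.toPreGraph.nd {i} \ K) \ G.toPreGraph.fa K) \ G.toPreGraph.mo {i}) \ {j})
      (fun w hw => by
        simp only [Finset.mem_sdiff] at hw
        simp only [Finset.mem_union]
        push_neg
        exact ⟨hw.1.1.2, hw.1.2⟩)
      (fun w hw => hsc w (Finset.mem_sdiff.mp hw).1)
      j (by simp) (hsc j hj)
    have hfa : ∀ x, x ∈ G.toPreGraph.fa K → x ∈ G.toPreGraph.nd {i} ∧ x ∉ K := fun x hx => by
      obtain ⟨a, haK, hsol⟩ := aux_mem_fa.mp hx
      exact aux_par_nd hK hiK haK (Or.inl hsol)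
    have hmo : ∀ x, x ∈ G.toPreGraph.mo {i} → x ∈ G.toPreGraph.nd {i} ∧ x ∉ K := fun x hx => by
      obtain ⟨a, ha, hda⟩ := aux_mem_mo.mp hx
      rw [Finset.mem_singleton] at ha
      subst ha
      exact aux_par_nd hK hiK hiK (Or.inr hda)
    have hid : (G.toPreGraph.fa K ∪ G.toPreGraph.mo {i}) ∪
        (((((G.toPreGraph.nd {i} \ K) \ G.toPreGraph.fa K) \ G.toPreGraph.mo {i})) \ {j})
        = (G.toPreGraph.nd {i} \ K) \ {j} := finid1 hfa hmo hjfa hjmo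
    rw [hid] at key
    exact (gaussCI_singleton_iff S i {j} _).mpr (fun w hw => by
      rw [Finset.mem_singleton] at hw
      subst hw
      exact key)
  · -- (P2)
    intro hj
    have hj' := hj
    simp only [Finset.mem_sdiff, Finset.mem_singleton] at hj'
    obtain ⟨⟨⟨hjN, hji⟩, hjfa⟩, hjmoK⟩ := hj'
    have hjpa : j ∉ G.toPreGraph.pa {i} := by
      intro h
      rcases aux_mem_pa.mp h with ⟨a, ha, hh⟩ | ⟨a, ha, hh⟩ <;> rw [Finset.mem_singleton] at ha
      · exact hjfa (aux_mem_fa.mpr ⟨i, Finset.mem_singleton_self i, ha ▸ hh⟩)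
      · exact hjmoK (aux_mem_mo.mpr ⟨i, hiK, ha ▸ hh⟩)
    have hjnb : j ∉ G.toPreGraph.nb {i} := by
      intro h
      obtain ⟨a, ha, hu⟩ := aux_mem_nb.mp h
      rw [Finset.mem_singleton] at ha
      subst ha
      exact hnadj (Or.inl (aux_und_symm hu))
    have hnbK : ∀ x, x ∈ G.toPreGraph.nb {i} → x ∈ K := by
      intro x hx
      obtain ⟨a, ha, hu⟩ := aux_mem_nb.mp hx
      rw [Finset.mem_singleton] at ha
      subst ha
      exact aux_cc_closed hK hiK (Relation.ReflTransGen.single (aux_und_symm hu))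
    have hjmonb : j ∉ G.toPreGraph.mo (G.toPreGraph.nb {i}) := by
      intro h
      obtain ⟨a, ha, hda⟩ := aux_mem_mo.mp h
      exact hjmoK (aux_mem_mo.mpr ⟨a, hnbK a ha, hda⟩)
    have hjB2 : j ∈ (((G.toPreGraph.nd {i} \ {i}) \ G.toPreGraph.pa {i}) \ G.toPreGraph.nb {i})
        \ G.toPreGraph.mo (G.toPreGraph.nb {i}) := by
      simp only [Finset.mem_sdiff, Finset.mem_singleton]
      exact ⟨⟨⟨⟨hjN, hji⟩, hjpa⟩, hjnb⟩, hjmonb⟩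
    have hsc : ∀ w ∈ (((G.toPreGraph.nd {i} \ {i}) \ G.toPreGraph.pa {i}) \ G.toPreGraph.nb {i})
        \ G.toPreGraph.mo (G.toPreGraph.nb {i}),
        kcov S (G.toPreGraph.pa {i} ∪ G.toPreGraph.nb {i}
          ∪ G.toPreGraph.mo (G.toPreGraph.nb {i})) i w = 0 :=
      fun w hw => (gaussCI_singleton_iff S i _ _).mp hL2 w hw
    have key := k_wu hS
      (((((G.toPreGraph.nd {i} \ {i}) \ G.toPreGraph.pa {i}) \ G.toPreGraph.nb {i})
        \ G.toPreGraph.mo (G.toPreGraph.nb {i})) \ {j})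
      (fun w hw => by
        simp only [Finset.mem_sdiff] at hw
        simp only [Finset.mem_union]
        push_neg
        exact ⟨⟨hw.1.1.1.2, hw.1.1.2⟩, hw.1.2⟩)
      (fun w hw => hsc w (Finset.mem_sdiff.mp hw).1)
      j (by simp) (hsc j hjB2)
    have hpa : ∀ x, x ∈ G.toPreGraph.pa {i} → x ∈ G.toPreGraph.nd {i} ∧ x ≠ i := by
      intro x hx
      have : x ∈ G.toPreGraph.nd {i} ∧ x ∉ K := by
        rcases aux_mem_pa.mp hx with ⟨a, ha, hh⟩ | ⟨a, ha, hh⟩ <;>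
          rw [Finset.mem_singleton] at ha
        · exact aux_par_nd hK hiK hiK (Or.inl (ha ▸ hh))
        · exact aux_par_nd hK hiK hiK (Or.inr (ha ▸ hh))
      exact ⟨this.1, fun he => this.2 (he ▸ hiK)⟩
    have hnb : ∀ x, x ∈ G.toPreGraph.nb {i} → x ∈ G.toPreGraph.nd {i} ∧ x ≠ i := by
      intro x hx
      refine ⟨aux_K_sub_nd hK hiK (hnbK x hx), ?_⟩
      intro he
      obtain ⟨a, ha, hu⟩ := aux_mem_nb.mp hx
      rw [Finset.mem_singleton] at ha
      subst ha
      subst he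
      rcases hu with h | h <;> exact G.undir_irrefl _ h
    have hmonb : ∀ x, x ∈ G.toPreGraph.mo (G.toPreGraph.nb {i}) →
        x ∈ G.toPreGraph.nd {i} ∧ x ≠ i := by
      intro x hx
      obtain ⟨a, ha, hda⟩ := aux_mem_mo.mp hx
      have := aux_par_nd hK hiK (hnbK a ha) (Or.inr hda)
      exact ⟨this.1, fun he => this.2 (he ▸ hiK)⟩
    have hid : (G.toPreGraph.pa {i} ∪ G.toPreGraph.nb {i}
          ∪ G.toPreGraph.mo (G.toPreGraph.nb {i})) ∪
        ((((((G.toPreGraph.nd {i} \ {i}) \ G.toPreGraph.pa {i}) \ G.toPreGraph.nb {i})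
          \ G.toPreGraph.mo (G.toPreGraph.nb {i}))) \ {j})
        = G.toPreGraph.nd {i} \ {i, j} := finid2 hpa hnb hmonb hjpa hjnb hjmonb
    rw [hid] at key
    exact (gaussCI_singleton_iff S i {j} _).mpr (fun w hw => by
      rw [Finset.mem_singleton] at hw
      subst hw
      exact key)

end MainDir


section MainBack

variable {V : Type*} [Fintype V] [DecidableEq V]

lemma aux_back {G : ChainGraph V} (hG : G.IsUCG) {S : Matrix V V ℝ} (hS : S.PosDef)
    (hpw : G.toPreGraph.pairwiseMP (gaussCI S)) : G.toPreGraph.localMP (gaussCI S) := by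
  intro K hK i hiK
  have hUCG : Disjoint (G.toPreGraph.fa K) (G.toPreGraph.mo K) := hG K hK
  have hfaP : ∀ x, x ∈ G.toPreGraph.fa K → x ∈ G.toPreGraph.nd {i} ∧ x ∉ K := by
    intro x hx
    obtain ⟨a, haK, hsol⟩ := aux_mem_fa.mp hx
    exact aux_par_nd hK hiK haK (Or.inl hsol)
  have hmoP : ∀ x, x ∈ G.toPreGraph.mo K → x ∈ G.toPreGraph.nd {i} ∧ x ∉ K := by
    intro x hx
    obtain ⟨a, haK, hda⟩ := aux_mem_mo.mp hx
    exact aux_par_nd hK hiK haK (Or.inr hda)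
  have hKN : ∀ x ∈ K, x ∈ G.toPreGraph.nd {i} := fun x hx => aux_K_sub_nd hK hiK hx
  have hnbK : ∀ x, x ∈ G.toPreGraph.nb {i} → x ∈ K := by
    intro x hx
    obtain ⟨a, ha, hu⟩ := aux_mem_nb.mp hx
    rw [Finset.mem_singleton] at ha
    subst ha
    exact aux_cc_closed hK hiK (Relation.ReflTransGen.single (aux_und_symm hu))
  constructor
  · -- (L1)
    have hfull : ∀ j ∈ ((G.toPreGraph.nd {i} \ K) \ G.toPreGraph.fa K) \ G.toPreGraph.mo {i},
        kcov S ((G.toPreGraph.nd {i} \ K) \ {j}) i j = 0 := by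
      intro j hj
      simp only [Finset.mem_sdiff] at hj
      obtain ⟨⟨⟨hjN, hjK⟩, hjfa⟩, hjmo⟩ := hj
      have hij : i ≠ j := fun he => hjK (he ▸ hiK)
      have hnadj : ¬ G.toPreGraph.adj i j := aux_mk_nonadj
        (fun h => hjK (aux_cc_closed hK hiK (Relation.ReflTransGen.single h)))
        (fun h => aux_nochild hK hiK hiK hjN (Or.inl h))
        (fun h => hjfa (aux_mem_fa.mpr ⟨i, hiK, h⟩))
        (fun h => aux_nochild hK hiK hiK hjN (Or.inr h))
        (fun h => hjmo (aux_mem_mo.mpr ⟨i, Finset.mem_singleton_self i, h⟩))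
      have hm := (hpw i j hij hnadj K hK hiK).1
        (by simp only [Finset.mem_sdiff]; exact ⟨⟨⟨hjN, hjK⟩, hjfa⟩, hjmo⟩)
      exact (gaussCI_singleton_iff S i {j} _).mp hm j (Finset.mem_singleton_self j)
    have hmain := k_mint hS (X := G.toPreGraph.nd {i} \ K)
      (B := ((G.toPreGraph.nd {i} \ K) \ G.toPreGraph.fa K) \ G.toPreGraph.mo {i}) (a := i)
      (by simp [hiK])
      (fun x hx => (Finset.mem_sdiff.mp (Finset.mem_sdiff.mp hx).1).1)
      hfull _ Finset.Subset.rfl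
    have hmoP' : ∀ x, x ∈ G.toPreGraph.mo {i} → x ∈ G.toPreGraph.nd {i} ∧ x ∉ K := by
      intro x hx
      obtain ⟨a, ha, hda⟩ := aux_mem_mo.mp hx
      rw [Finset.mem_singleton] at ha
      exact aux_par_nd hK hiK hiK (Or.inr (ha ▸ hda))
    have hid := finid3 hfaP hmoP'
    refine (gaussCI_singleton_iff S i _ _).mpr (fun j hj => ?_)
    have := hmain j hj
    rwa [hid] at this
  · -- (L2)
    have hpaP : ∀ x, x ∈ G.toPreGraph.pa {i} → x ∈ G.toPreGraph.nd {i} ∧ x ≠ i := by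
      intro x hx
      have hh : x ∈ G.toPreGraph.nd {i} ∧ x ∉ K := by
        rcases aux_mem_pa.mp hx with ⟨a, ha, hh⟩ | ⟨a, ha, hh⟩ <;>
          rw [Finset.mem_singleton] at ha
        · exact aux_par_nd hK hiK hiK (Or.inl (ha ▸ hh))
        · exact aux_par_nd hK hiK hiK (Or.inr (ha ▸ hh))
      exact ⟨hh.1, fun he => hh.2 (he ▸ hiK)⟩
    have hnbP : ∀ x, x ∈ G.toPreGraph.nb {i} → x ∈ G.toPreGraph.nd {i} ∧ x ≠ i := by
      intro x hx
      refine ⟨hKN x (hnbK x hx), ?_⟩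
      intro he
      obtain ⟨a, ha, hu⟩ := aux_mem_nb.mp hx
      rw [Finset.mem_singleton] at ha
      subst ha
      subst he
      rcases hu with h | h <;> exact G.undir_irrefl _ h
    have hmonbP : ∀ x, x ∈ G.toPreGraph.mo (G.toPreGraph.nb {i}) →
        x ∈ G.toPreGraph.nd {i} ∧ x ≠ i := by
      intro x hx
      obtain ⟨a, ha, hda⟩ := aux_mem_mo.mp hx
      have := aux_par_nd hK hiK (hnbK a ha) (Or.inr hda)
      exact ⟨this.1, fun he => this.2 (he ▸ hiK)⟩
    have hfull : ∀ j ∈ (((G.toPreGraph.nd {i} \ {i}) \ G.toPreGraph.pa {i})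
          \ G.toPreGraph.nb {i}) \ G.toPreGraph.mo (G.toPreGraph.nb {i}),
        kcov S ((G.toPreGraph.nd {i} \ {i}) \ {j}) i j = 0 := by
      intro j hj
      simp only [Finset.mem_sdiff, Finset.mem_singleton] at hj
      obtain ⟨⟨⟨⟨hjN, hji⟩, hjpa⟩, hjnb⟩, hjmonb⟩ := hj
      have hij : i ≠ j := fun he => hji he.symm
      have hjfai : ¬ G.toPreGraph.solid j i :=
        fun h => hjpa (aux_mem_pa.mpr (Or.inl ⟨i, Finset.mem_singleton_self i, h⟩))
      have hjmoi : ¬ G.toPreGraph.dashed j i :=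
        fun h => hjpa (aux_mem_pa.mpr (Or.inr ⟨i, Finset.mem_singleton_self i, h⟩))
      have hnadj : ¬ G.toPreGraph.adj i j := aux_mk_nonadj
        (fun h => hjnb (aux_mem_nb.mpr ⟨i, Finset.mem_singleton_self i, aux_und_symm h⟩))
        (fun h => aux_nochild hK hiK hiK hjN (Or.inl h))
        hjfai
        (fun h => aux_nochild hK hiK hiK hjN (Or.inr h))
        hjmoi
      by_cases hjmoK : j ∈ G.toPreGraph.mo K
      · -- the hard case: j is a mother of K
        set ch := K.filter (fun h => G.toPreGraph.dashed j h) with hch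
        have hmemch : ∀ x, x ∈ ch ↔ x ∈ K ∧ G.toPreGraph.dashed j x := by
          intro x; simp [hch]
        have hjK : j ∉ K := (hmoP j hjmoK).2
        have hjfaK : j ∉ G.toPreGraph.fa K :=
          fun h => (Finset.disjoint_left.mp hUCG h) hjmoK
        have hich : i ∉ ch := fun h => hjmoi ((hmemch i).mp h).2
        have hjch : j ∉ ch := fun h => hjK ((hmemch j).mp h).1
        -- (a) pairwise facts towards j from non-children of j in K
        have hfa_a : ∀ a, a ∈ K → ¬ G.toPreGraph.dashed j a →
            kcov S ((G.toPreGraph.nd {i} \ K) \ {j}) a j = 0 := by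
          intro a haK hnd
          have haj : a ≠ j := fun he => hjK (he ▸ haK)
          have hnadja : ¬ G.toPreGraph.adj a j := aux_mk_nonadj
            (fun h => hjK (aux_cc_closed hK hiK
              (Relation.ReflTransGen.tail (aux_uconn_of_mem hK hiK a haK) h)))
            (fun h => aux_nochild hK hiK haK hjN (Or.inl h))
            (fun h => hjfaK (aux_mem_fa.mpr ⟨a, haK, h⟩))
            (fun h => aux_nochild hK hiK haK hjN (Or.inr h))
            hnd
          have hmem : j ∈ ((G.toPreGraph.nd {a} \ K) \ G.toPreGraph.fa K)
              \ G.toPreGraph.mo {a} := by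
            rw [aux_nd_congr hK hiK haK]
            simp only [Finset.mem_sdiff]
            refine ⟨⟨⟨hjN, hjK⟩, hjfaK⟩, ?_⟩
            intro h
            obtain ⟨x, hx, hd⟩ := aux_mem_mo.mp h
            rw [Finset.mem_singleton] at hx
            exact hnd (hx ▸ hd)
          have hm := (hpw a j haj hnadja K hK haK).1 hmem
          rw [aux_nd_congr hK hiK haK] at hm
          exact (gaussCI_singleton_iff S a {j} _).mp hm j (Finset.mem_singleton_self j)
        -- (b) extend the conditioning by the non-children in K
        have hb : kcov S (((G.toPreGraph.nd {i} \ {i}) \ {j}) \ ch) i j = 0 := by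
          have hstep := k_as hS ((K \ ch) \ {i})
            (fun w hw => by
              simp only [Finset.mem_sdiff, Finset.mem_singleton] at hw ⊢
              intro hc
              exact hc.1.2 hw.1.1)
            (fun w hw => by
              simp only [Finset.mem_sdiff, Finset.mem_singleton] at hw
              refine hfa_a w hw.1.1 (fun hd => ?_)
              exact hw.1.2 ((hmemch w).mpr ⟨hw.1.1, hd⟩))
            i (hfa_a i hiK hjmoi)
          rwa [finid5 hKN (fun x hx => ((hmemch x).mp hx).1) hiK hjK] at hstep
        -- (c) P2 facts for the children of j in K
        have hc : ∀ h ∈ ch, kcov S ((G.toPreGraph.nd {i} \ {i}) \ {h}) i h = 0 := by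
          intro h hhch
          obtain ⟨hhK, hdjh⟩ := (hmemch h).mp hhch
          have hhi : h ≠ i := fun he => hjmoi (he ▸ hdjh)
          have hhnb : h ∉ G.toPreGraph.nb {i} :=
            fun hn => hjmonb (aux_mem_mo.mpr ⟨h, hn, hdjh⟩)
          have hih : i ≠ h := fun he => hhi he.symm
          have hnadjih : ¬ G.toPreGraph.adj i h := aux_mk_nonadj
            (fun hu => hhnb (aux_mem_nb.mpr ⟨i, Finset.mem_singleton_self i, aux_und_symm hu⟩))
            (fun hs => aux_nochild hK hiK hiK (hKN h hhK) (Or.inl hs))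
            (fun hs => (aux_par_nd hK hiK hiK (Or.inl hs)).2 hhK)
            (fun hd => aux_nochild hK hiK hiK (hKN h hhK) (Or.inr hd))
            (fun hd => (aux_par_nd hK hiK hiK (Or.inr hd)).2 hhK)
          have hmem : h ∈ ((G.toPreGraph.nd {i} \ {i}) \ G.toPreGraph.fa {i})
              \ G.toPreGraph.mo K := by
            simp only [Finset.mem_sdiff, Finset.mem_singleton]
            refine ⟨⟨⟨hKN h hhK, hhi⟩, ?_⟩, fun hm => (hmoP h hm).2 hhK⟩
            intro hf
            obtain ⟨x, hx, hs⟩ := aux_mem_fa.mp hf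
            rw [Finset.mem_singleton] at hx
            exact (aux_par_nd hK hiK hiK (Or.inl (hx ▸ hs))).2 hhK
          have hm := (hpw i h hih hnadjih K hK hiK).2 hmem
          have hm' := (gaussCI_singleton_iff S i {h} _).mp hm h (Finset.mem_singleton_self h)
          rwa [finid0] at hm'
        -- (d) intersection over the children
        have hchsub : ch ⊆ G.toPreGraph.nd {i} \ {i} := by
          intro x hx
          obtain ⟨hxK, hdx⟩ := (hmemch x).mp hx
          simp only [Finset.mem_sdiff, Finset.mem_singleton]
          exact ⟨hKN x hxK, fun he => hjmoi (he ▸ hdx)⟩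
        have hd1 : ∀ h ∈ ch, kcov S ((G.toPreGraph.nd {i} \ {i}) \ ch) i h = 0 :=
          fun h hh => k_mint hS (by simp) hchsub hc ch Finset.Subset.rfl h hh
        -- (e) remove j from the conditioning
        have hid6 : insert j (((G.toPreGraph.nd {i} \ {i}) \ {j}) \ ch)
            = (G.toPreGraph.nd {i} \ {i}) \ ch := finid6 hjN hji hjch
        have he : ∀ h ∈ ch, kcov S (((G.toPreGraph.nd {i} \ {i}) \ {j}) \ ch) i h = 0 := by
          intro h hh
          exact k_rem hS (by simp) hb (by rw [hid6]; exact hd1 h hh)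
        -- (f) add the children to the conditioning
        have hfin := k_wu hS ch
          (fun w hw => by
            simp only [Finset.mem_sdiff, Finset.mem_singleton]
            intro hcon
            exact hcon.2 hw)
          he j hjch hb
        rwa [finid7 (fun x hx => by
          obtain ⟨hxK, hdx⟩ := (hmemch x).mp hx
          exact ⟨hKN x hxK, fun he' => hjmoi (he' ▸ hdx)⟩) hjch] at hfin
      · -- easy case: direct (P2)
        have hjfa' : j ∉ G.toPreGraph.fa {i} := by
          intro hf
          obtain ⟨x, hx, hs⟩ := aux_mem_fa.mp hf
          rw [Finset.mem_singleton] at hx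
          exact hjfai (hx ▸ hs)
        have hm := (hpw i j hij hnadj K hK hiK).2
          (by
            simp only [Finset.mem_sdiff, Finset.mem_singleton]
            exact ⟨⟨⟨hjN, hji⟩, hjfa'⟩, hjmoK⟩)
        have hm' := (gaussCI_singleton_iff S i {j} _).mp hm j (Finset.mem_singleton_self j)
        rwa [finid0] at hm'
    have hmain := k_mint hS (X := G.toPreGraph.nd {i} \ {i})
      (B := (((G.toPreGraph.nd {i} \ {i}) \ G.toPreGraph.pa {i}) \ G.toPreGraph.nb {i})
        \ G.toPreGraph.mo (G.toPreGraph.nb {i})) (a := i)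
      (by simp)
      (fun x hx =>
        (Finset.mem_sdiff.mp (Finset.mem_sdiff.mp (Finset.mem_sdiff.mp hx).1).1).1)
      hfull _ Finset.Subset.rfl
    have hid := finid4 hpaP hnbP hmonbP
    refine (gaussCI_singleton_iff S i _ _).mpr (fun j hj => ?_)
    have := hmain j hj
    rwa [hid] at this

end MainBack

/-- **Theorem 6.** The local and pairwise Markov properties with respect to a UCG are
equivalent for Gaussian distributions. -/
theorem local_iff_pairwise_for_gaussians
    {V : Type*} [Fintype V] [DecidableEq V] (G : ChainGraph V) (hG : G.IsUCG)
    (S : Matrix V V ℝ) (hS : S.PosDef) :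
    G.toPreGraph.localMP (gaussCI S) ↔ G.toPreGraph.pairwiseMP (gaussCI S) :=
  ⟨aux_fwd hS, aux_back hG hS⟩
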